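/- arXiv:2601.05281 — 2 statements merged into one kernel-verified Lean document; each statement's English description precedes it below -/
import Mathlib

section
/- Let $X$ be Gamma-distributed with shape $kL$ and scale $\theta_1 = \rho g + \sigma_0^2$, and let $Y$ be an independent Gamma random variable with shape $(q-k)L$ and scale $\theta_2 = \sigma_0^2$, where $0 < k < q$ are integers, $L$ a positive integer, and $\rho g, \sigma_0^2 > 0$. Then the density of $Z = X+Y$ at $z > 0$ equals $\frac{z^{qL-1} e^{-z/\sigma_0^2}}{\Gamma(qL)\,(\rho g+\sigma_0^2)^{kL}(\sigma_0^2)^{(q-k)L}}\, {}_1F_1\!\left(kL; qL; \frac{\rho g z}{\sigma_0^2(\rho g+\sigma_0^2)}\right)$, where ${}_1F_1$ is the Kummer confluent hypergeometric function. -/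
open MeasureTheory ProbabilityTheory Real Set Filter

/-- Upper regularized incomplete Gamma function `Q(a,x)`. -/
noncomputable def upperRegGamma (a x : ℝ) : ℝ :=
  (∫ t in Set.Ioi x, t ^ (a - 1) * Real.exp (-t)) / Real.Gamma a

/-- Lower regularized incomplete Gamma function `P(a,x)`. -/
noncomputable def lowerRegGamma (a x : ℝ) : ℝ :=
  (∫ t in Set.Ioc (0:ℝ) x, t ^ (a - 1) * Real.exp (-t)) / Real.Gamma a

/-- Pochhammer (rising factorial) symbol `(a)_n`. -/
noncomputable def poch (a : ℝ) (n : ℕ) : ℝ := Polynomial.eval a (ascPochhammer ℝ n)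

/-- Kummer confluent hypergeometric function `₁F₁(a;b;x)`. -/
noncomputable def kummerF (a b x : ℝ) : ℝ :=
  ∑' n : ℕ, poch a n / poch b n * x ^ n / (n.factorial : ℝ)

/-- Tricomi confluent hypergeometric function `U(a,b,z)` (integral representation). -/
noncomputable def tricomiU (a b z : ℝ) : ℝ :=
  (1 / Real.Gamma a) *
    ∫ t in Set.Ioi (0:ℝ), Real.exp (-(z * t)) * t ^ (a - 1) * (1 + t) ^ (b - a - 1)

/-- Gamma density with shape `α` and scale `θ`. -/
noncomputable def gammaDensity (α θ x : ℝ) : ℝ :=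
  x ^ (α - 1) * Real.exp (-x / θ) / (Real.Gamma α * θ ^ α)

/-- Exponential integral `E₁(x)`. -/
noncomputable def expInt (x : ℝ) : ℝ := ∫ t in Set.Ioi x, Real.exp (-t) / t

section Aux
open intervalIntegral

lemma beta1 (m p : ℕ) : ∫ x in (0:ℝ)..1, x^m * (1-x)^p
    = (m.factorial : ℝ) * p.factorial / ((m+p+1).factorial : ℝ) := by
  have hB := Complex.Gamma_mul_Gamma_eq_betaIntegral
    (s := (m:ℂ)+1) (t := (p:ℂ)+1) (by simp; positivity) (by simp; positivity)
  have hint : Complex.betaIntegral ((m:ℂ)+1) ((p:ℂ)+1)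
      = ((∫ x in (0:ℝ)..1, x^m * (1-x)^p : ℝ) : ℂ) := by
    rw [Complex.betaIntegral, ← intervalIntegral.integral_ofReal]
    apply intervalIntegral.integral_congr
    intro x hx
    push_cast
    rw [add_sub_cancel_right, add_sub_cancel_right, Complex.cpow_natCast,
      Complex.cpow_natCast]
  rw [hint] at hB
  have h2 : ((m:ℂ)+1) + ((p:ℂ)+1) = ((m+p+1 : ℕ):ℂ) + 1 := by push_cast; ring
  rw [h2, Complex.Gamma_nat_eq_factorial, Complex.Gamma_nat_eq_factorial,
    Complex.Gamma_nat_eq_factorial] at hB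
  have hne : ((m+p+1).factorial : ℂ) ≠ 0 := Nat.cast_ne_zero.2 (Nat.factorial_ne_zero _)
  have : ((∫ x in (0:ℝ)..1, x^m * (1-x)^p : ℝ) : ℂ)
      = ((m.factorial : ℂ) * p.factorial / ((m+p+1).factorial : ℂ)) := by
    rw [eq_div_iff hne]
    linear_combination -hB
  rw [show ((m.factorial:ℂ) * p.factorial / ((m+p+1).factorial:ℂ))
      = (((m.factorial:ℝ) * p.factorial / ((m+p+1).factorial:ℝ) : ℝ) : ℂ) by push_cast; ring] at this
  exact Complex.ofReal_inj.mp this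

lemma betaz (m p : ℕ) {z : ℝ} (hz : 0 < z) :
    ∫ x in (0:ℝ)..z, x^m * (z-x)^p
      = z^(m+p+1) * ((m.factorial : ℝ) * p.factorial / ((m+p+1).factorial : ℝ)) := by
  have h := intervalIntegral.smul_integral_comp_mul_left
    (fun x => x^m * (z-x)^p) z (a := 0) (b := 1)
  simp only [mul_zero, mul_one, smul_eq_mul] at h
  rw [← h]
  have : ∀ t : ℝ, (z*t)^m * (z - z*t)^p = z^m * z^p * (t^m * (1-t)^p) := by
    intro t
    rw [show z - z*t = z*(1-t) by ring, mul_pow, mul_pow]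
    ring
  simp only [this]
  rw [intervalIntegral.integral_const_mul, beta1]
  ring

lemma keySum (m p : ℕ) {z lam : ℝ} (hz : 0 < z) (hlam : 0 < lam) :
    ∫ x in Set.Ioo (0:ℝ) z, x^m * (z-x)^p * Real.exp (lam*x)
      = ∑' n : ℕ, lam^n / n.factorial *
          (z^(m+n+p+1) * (((m+n).factorial : ℝ) * p.factorial / ((m+n+p+1).factorial : ℝ))) := by
  set F : ℕ → ℝ → ℝ := fun n x => lam^n / n.factorial * (x^(m+n) * (z-x)^p) with hF
  have hexp : ∀ x : ℝ, x^m * (z-x)^p * Real.exp (lam*x) = ∑' n : ℕ, F n x := by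
    intro x
    rw [Real.exp_eq_exp_ℝ, NormedSpace.exp_eq_tsum_div, ← tsum_mul_left]
    congr 1; funext n
    rw [hF]; simp only
    rw [mul_pow, pow_add]
    ring
  simp only [hexp]
  have hcont : ∀ n, Continuous (F n) := by
    intro n; fun_prop
  have hInt : ∀ n, Integrable (F n) (volume.restrict (Set.Ioo 0 z)) := by
    intro n
    exact ((hcont n).integrableOn_Ioc.mono_set Set.Ioo_subset_Ioc_self)
  have hval : ∀ n, ∫ x in Set.Ioo (0:ℝ) z, F n x
      = lam^n / n.factorial *
          (z^(m+n+p+1) * (((m+n).factorial : ℝ) * p.factorial / ((m+n+p+1).factorial : ℝ))) := by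
    intro n
    rw [← MeasureTheory.integral_Ioc_eq_integral_Ioo,
      ← intervalIntegral.integral_of_le hz.le]
    rw [intervalIntegral.integral_const_mul, betaz (m+n) p hz]
  have hnorm : ∀ n, ∫ x in Set.Ioo (0:ℝ) z, ‖F n x‖
      ≤ z * (lam^n / n.factorial * (z^(m+n) * z^p)) := by
    intro n
    have hb : ∀ x ∈ Set.Ioo (0:ℝ) z, ‖F n x‖ ≤ lam^n / n.factorial * (z^(m+n) * z^p) := by
      intro x hx
      obtain ⟨hx0, hxz⟩ := hx
      have hzx : (0:ℝ) ≤ z - x := by linarith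
      simp only [hF]
      rw [Real.norm_eq_abs, abs_of_nonneg (by positivity)]
      gcongr <;> first | positivity | linarith
    calc ∫ x in Set.Ioo (0:ℝ) z, ‖F n x‖
        ≤ ∫ _x in Set.Ioo (0:ℝ) z, lam^n / n.factorial * (z^(m+n) * z^p) := by
          apply MeasureTheory.setIntegral_mono_on (hInt n).norm
            (integrable_const _) measurableSet_Ioo hb
      _ = z * (lam^n / n.factorial * (z^(m+n) * z^p)) := by
          rw [MeasureTheory.setIntegral_const]
          simp [Real.volume_Ioo, ENNReal.toReal_ofReal hz.le, hz.le]
  have hsum : Summable fun n => ∫ x in Set.Ioo (0:ℝ) z, ‖F n x‖ := by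
    apply Summable.of_nonneg_of_le (fun n => ?_) (fun n => hnorm n)
    · apply ((Real.summable_pow_div_factorial (lam*z)).mul_left (z * (z^m * z^p))).congr
      intro n
      rw [mul_pow, pow_add]
      field_simp
    · positivity
  rw [← MeasureTheory.integral_tsum_of_summable_integral_norm hInt hsum]
  exact tsum_congr hval

lemma poch_natCast (a : ℕ) (n : ℕ) : poch (a : ℝ) n = (a.ascFactorial n : ℝ) := by
  rw [poch, ← ascPochhammer_eval_cast, ascPochhammer_nat_eq_ascFactorial]


end Aux

theorem stmt_1 (k q L : ℕ) (hk : 0 < k) (hkq : k < q) (hL : 0 < L)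
    (ρg σ0sq : ℝ) (hρg : 0 < ρg) (hσ : 0 < σ0sq) (z : ℝ) (hz : 0 < z) :
    ∫ x in (0:ℝ)..z,
        gammaDensity ((k : ℝ) * L) (ρg + σ0sq) x *
          gammaDensity (((q : ℝ) - k) * L) σ0sq (z - x) =
      z ^ ((q : ℝ) * L - 1) * Real.exp (-z / σ0sq) /
          (Real.Gamma ((q : ℝ) * L) * (ρg + σ0sq) ^ ((k : ℝ) * L) *
            σ0sq ^ (((q : ℝ) - k) * L)) *
        kummerF ((k : ℝ) * L) ((q : ℝ) * L) (ρg * z / (σ0sq * (ρg + σ0sq))) := by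
  have hθ1 : (0:ℝ) < ρg + σ0sq := by linarith
  set lam : ℝ := ρg / (σ0sq * (ρg + σ0sq)) with hlamdef
  have hlam : 0 < lam := by positivity
  obtain ⟨m, hm⟩ : ∃ m, k*L = m+1 := ⟨k*L-1, by
    have : 0 < k*L := Nat.mul_pos hk hL; omega⟩
  obtain ⟨p, hp⟩ : ∃ p, (q-k)*L = p+1 := ⟨(q-k)*L-1, by
    have : 0 < (q-k)*L := Nat.mul_pos (by omega) hL; omega⟩
  have hql : q*L = m+p+2 := by
    have : k*L + (q-k)*L = q*L := by
      rw [← Nat.add_mul]; congr 1; omega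
    omega
  have hA : (k:ℝ)*L = ((m+1:ℕ):ℝ) := by rw [← hm]; push_cast; ring
  have hB : ((q:ℝ)-k)*L = ((p+1:ℕ):ℝ) := by
    rw [← hp]; push_cast [Nat.cast_sub hkq.le]; ring
  have hQ : (q:ℝ)*L = ((m+p+2:ℕ):ℝ) := by rw [← hql]; push_cast; ring
  set C : ℝ := Real.exp (-z/σ0sq) /
      ((m.factorial : ℝ) * (ρg+σ0sq)^(m+1) * (p.factorial : ℝ) * σ0sq^(p+1)) with hC
  have hcongr : ∀ x ∈ Set.Ioo (0:ℝ) z,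
      gammaDensity ((k : ℝ) * L) (ρg + σ0sq) x *
          gammaDensity (((q : ℝ) - k) * L) σ0sq (z - x)
        = C * (x^m * (z-x)^p * Real.exp (lam*x)) := by
    intro x hx
    obtain ⟨hx0, hxz⟩ := hx
    have hzx : (0:ℝ) < z - x := by linarith
    rw [gammaDensity, gammaDensity, hA, hB]
    have e1 : ((m+1:ℕ):ℝ) - 1 = ((m:ℕ):ℝ) := by push_cast; ring
    have e2 : ((p+1:ℕ):ℝ) - 1 = ((p:ℕ):ℝ) := by push_cast; ring
    have e3 : ((m+1:ℕ):ℝ) = ((m:ℕ):ℝ) + 1 := by push_cast; ring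
    have e4 : ((p+1:ℕ):ℝ) = ((p:ℕ):ℝ) + 1 := by push_cast; ring
    rw [e1, e2, Real.rpow_natCast x m, Real.rpow_natCast (z-x) p,
      Real.rpow_natCast (ρg+σ0sq) (m+1), Real.rpow_natCast σ0sq (p+1),
      e3, e4, Real.Gamma_nat_eq_factorial, Real.Gamma_nat_eq_factorial]
    have hexpeq : Real.exp (-x/(ρg+σ0sq)) * Real.exp ((x-z)/σ0sq)
        = Real.exp (-z/σ0sq) * Real.exp (lam*x) := by
      rw [← Real.exp_add, ← Real.exp_add]
      congr 1
      rw [hlamdef]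
      field_simp
      ring
    rw [hC]
    field_simp
    have hexpeq' : Real.exp (-(x/(ρg+σ0sq))) * Real.exp (-((z-x)/σ0sq))
        = Real.exp (-(z/σ0sq)) * Real.exp (x*lam) := by
      rw [show -(x/(ρg+σ0sq)) = -x/(ρg+σ0sq) by ring, show -((z-x)/σ0sq) = (x-z)/σ0sq by ring,
        show -(z/σ0sq) = -z/σ0sq by ring, mul_comm x lam]
      exact hexpeq
    linear_combination hexpeq'
  rw [intervalIntegral.integral_of_le hz.le, MeasureTheory.integral_Ioc_eq_integral_Ioo,
    MeasureTheory.setIntegral_congr_fun measurableSet_Ioo hcongr,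
    MeasureTheory.integral_const_mul, keySum m p hz hlam]
  -- now both sides are tsums (after rewriting kummerF)
  have hw : ρg * z / (σ0sq * (ρg + σ0sq)) = lam * z := by rw [hlamdef]; ring
  rw [hw, kummerF, ← tsum_mul_left, ← tsum_mul_left]
  apply tsum_congr
  intro n
  rw [hA, hQ, hB, poch_natCast, poch_natCast]
  have hasc1 : (m.factorial : ℝ) * ((m+1).ascFactorial n : ℝ) = ((m+n).factorial : ℝ) := by
    exact_mod_cast congrArg (Nat.cast : ℕ → ℝ) (Nat.factorial_mul_ascFactorial m n)
  have hasc2 : ((m+p+1).factorial : ℝ) * ((m+p+2).ascFactorial n : ℝ)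
      = ((m+n+p+1).factorial : ℝ) := by
    have := Nat.factorial_mul_ascFactorial (m+p+1) n
    have h2 : m+p+1+n = m+n+p+1 := by omega
    rw [h2] at this
    exact_mod_cast congrArg (Nat.cast : ℕ → ℝ) this
  have e5 : z ^ (((m+p+2:ℕ):ℝ) - 1) = z^(m+p+1) := by
    rw [show ((m+p+2:ℕ):ℝ) - 1 = ((m+p+1:ℕ):ℝ) by push_cast; ring, Real.rpow_natCast]
  have e6 : (ρg+σ0sq) ^ (((m+1:ℕ):ℝ)) = (ρg+σ0sq)^(m+1) := Real.rpow_natCast _ _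
  have e7 : σ0sq ^ (((p+1:ℕ):ℝ)) = σ0sq^(p+1) := Real.rpow_natCast _ _
  have e8 : Real.Gamma ((m+p+2:ℕ):ℝ) = ((m+p+1).factorial : ℝ) := by
    rw [show ((m+p+2:ℕ):ℝ) = ((m+p+1:ℕ):ℝ) + 1 by push_cast; ring,
      Real.Gamma_nat_eq_factorial]
  rw [e5, e6, e7, e8, hC]
  have f1 : (m.factorial : ℝ) ≠ 0 := Nat.cast_ne_zero.2 (Nat.factorial_ne_zero _)
  have f2 : (p.factorial : ℝ) ≠ 0 := Nat.cast_ne_zero.2 (Nat.factorial_ne_zero _)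
  have f3 : ((n.factorial : ℕ) : ℝ) ≠ 0 := Nat.cast_ne_zero.2 (Nat.factorial_ne_zero _)
  have f4 : ((m+n).factorial : ℝ) ≠ 0 := Nat.cast_ne_zero.2 (Nat.factorial_ne_zero _)
  have f5 : ((m+n+p+1).factorial : ℝ) ≠ 0 := Nat.cast_ne_zero.2 (Nat.factorial_ne_zero _)
  have f6 : ((m+p+1).factorial : ℝ) ≠ 0 := Nat.cast_ne_zero.2 (Nat.factorial_ne_zero _)
  have g1 : ((m+1).ascFactorial n : ℝ) = ((m+n).factorial : ℝ) / m.factorial := by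
    rw [eq_div_iff f1]; linear_combination hasc1
  have g2 : ((m+p+2).ascFactorial n : ℝ)
      = ((m+n+p+1).factorial : ℝ) / ((m+p+1).factorial : ℝ) := by
    rw [eq_div_iff f6]; linear_combination hasc2
  rw [g1, g2]
  have hθ1' : ρg + σ0sq ≠ 0 := ne_of_gt hθ1
  have hσ' : σ0sq ≠ 0 := ne_of_gt hσ
  field_simp
  ring
end

section
/- Let $G$ be exponentially distributed with mean $\omega_e > 0$, and let $\rho, \sigma_0^2, \gamma_e > 0$, and let $k, L, q$ be positive integers with $k \le q$. Then $\mathbb{E}_G\!\left[\left(\frac{\sigma_0^2}{\rho G+\sigma_0^2}\right)^{kL} \sum_{n=0}^\infty \frac{(kL)_n}{n!}\left(\frac{\rho G}{\rho G+\sigma_0^2}\right)^n P\!\left(qL+n,\frac{\gamma_e}{\sigma_0^2}\right)\right] = \frac{\sigma_0^2}{\rho\omega_e}\sum_{n=0}^\infty (kL)_n\, U\!\left(n+1, 2-kL, \frac{\sigma_0^2}{\rho\omega_e}\right) P\!\left(qL+n, \frac{\gamma_e}{\sigma_0^2}\right)$. -/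
open MeasureTheory ProbabilityTheory Real Set Filter

lemma intA (ωe ρ σ0sq : ℝ) (hω : 0 < ωe) (hρ : 0 < ρ) (hσ : 0 < σ0sq) (M : ℝ) (n : ℕ) :
    ∫ g in Set.Ioi (0:ℝ), (1 / ωe) * Real.exp (-g / ωe) *
        ((σ0sq / (ρ * g + σ0sq)) ^ M * (ρ * g / (ρ * g + σ0sq)) ^ n) =
      σ0sq / (ρ * ωe) * n.factorial *
        tricomiU ((n : ℝ) + 1) (2 - M) (σ0sq / (ρ * ωe)) := by
  set z : ℝ := σ0sq / (ρ * ωe) with hz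
  have hb : (0:ℝ) < σ0sq / ρ := div_pos hσ hρ
  have key := integral_comp_mul_left_Ioi
    (fun g => (1 / ωe) * Real.exp (-g / ωe) *
      ((σ0sq / (ρ * g + σ0sq)) ^ M * (ρ * g / (ρ * g + σ0sq)) ^ n)) 0 hb
  rw [mul_zero] at key
  beta_reduce at key
  rw [eq_comm, inv_smul_eq_iff₀ hb.ne'] at key
  rw [key, smul_eq_mul]
  have hpt : ∀ t ∈ Set.Ioi (0:ℝ),
      (1 / ωe) * Real.exp (-(σ0sq / ρ * t) / ωe) *
        ((σ0sq / (ρ * (σ0sq / ρ * t) + σ0sq)) ^ M *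
          (ρ * (σ0sq / ρ * t) / (ρ * (σ0sq / ρ * t) + σ0sq)) ^ n) =
      (1 / ωe) * (Real.exp (-(z * t)) * t ^ (((n:ℝ) + 1) - 1) *
        (1 + t) ^ ((2 - M) - ((n:ℝ) + 1) - 1)) := by
    intro t ht
    have ht0 : (0:ℝ) < t := ht
    have h1t : (0:ℝ) < 1 + t := by linarith
    have hrb : ρ * (σ0sq / ρ * t) = σ0sq * t := by field_simp
    have hden : ρ * (σ0sq / ρ * t) + σ0sq = σ0sq * (1 + t) := by rw [hrb]; ring
    have e1 : σ0sq / (ρ * (σ0sq / ρ * t) + σ0sq) = (1 + t)⁻¹ := by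
      rw [hden]; field_simp
    have e2 : ρ * (σ0sq / ρ * t) / (ρ * (σ0sq / ρ * t) + σ0sq) = t / (1 + t) := by
      rw [hrb, show σ0sq * t + σ0sq = σ0sq * (1+t) by ring]
      exact mul_div_mul_left t (1+t) hσ.ne'
    have e3 : -(σ0sq / ρ * t) / ωe = -(z * t) := by rw [hz]; ring
    rw [e1, e2, e3]
    have e4 : ((1 + t)⁻¹) ^ M = (1 + t) ^ (-M) := by
      rw [Real.inv_rpow h1t.le, ← Real.rpow_neg h1t.le]
    have e5 : (t / (1 + t)) ^ n = t ^ (((n:ℝ) + 1) - 1) * (1 + t) ^ (-(n:ℝ)) := by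
      rw [div_pow, show ((n:ℝ) + 1) - 1 = (n:ℝ) by ring, Real.rpow_natCast,
        Real.rpow_neg h1t.le, Real.rpow_natCast]
      ring
    rw [e4, e5]
    rw [show ((2 - M) - ((n:ℝ) + 1) - 1) = -M + -(n:ℝ) by ring, Real.rpow_add h1t]
    ring
  rw [setIntegral_congr_fun (by measurability) hpt]
  rw [integral_const_mul, tricomiU, Real.Gamma_nat_eq_factorial]
  have hfac : ((n.factorial : ℝ)) ≠ 0 := Nat.cast_ne_zero.mpr n.factorial_ne_zero
  generalize (∫ t in Set.Ioi (0:ℝ), Real.exp (-(z*t)) * t ^ (((n:ℝ)+1)-1) * (1+t) ^ ((2-M)-((n:ℝ)+1)-1)) = I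
  rw [hz]
  field_simp

lemma lrg_nonneg (a x : ℝ) (ha : 0 < a) : 0 ≤ lowerRegGamma a x := by
  unfold lowerRegGamma
  apply div_nonneg _ (Real.Gamma_nonneg_of_nonneg ha.le)
  apply setIntegral_nonneg measurableSet_Ioc
  intro t ht
  exact mul_nonneg (Real.rpow_nonneg ht.1.le _) (Real.exp_pos _).le

lemma lrg_le (a x : ℝ) (ha : 1 ≤ a) (hx : 0 < x) :
    lowerRegGamma a x ≤ x ^ a / (a * Real.Gamma a) := by
  have ha0 : 0 < a := lt_of_lt_of_le one_pos ha
  have hg : 0 < Real.Gamma a := Real.Gamma_pos_of_pos ha0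
  have hintr : IntegrableOn (fun t : ℝ => t ^ (a-1)) (Set.Ioc 0 x) := by
    exact (intervalIntegrable_iff_integrableOn_Ioc_of_le hx.le).mp
      (intervalIntegral.intervalIntegrable_rpow' (by linarith))
  have h1 : (∫ t in Set.Ioc (0:ℝ) x, t ^ (a-1) * Real.exp (-t)) ≤
      ∫ t in Set.Ioc (0:ℝ) x, t ^ (a-1) := by
    have hm : AEStronglyMeasurable (fun t : ℝ => t ^ (a-1) * Real.exp (-t))
        (volume.restrict (Set.Ioc 0 x)) :=
      AEStronglyMeasurable.mul hintr.1
        ((Real.continuous_exp.comp continuous_neg).aestronglyMeasurable)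
    have hprod : IntegrableOn (fun t : ℝ => t ^ (a-1) * Real.exp (-t)) (Set.Ioc 0 x) := by
      refine hintr.mono' hm ?_
      rw [ae_restrict_iff' measurableSet_Ioc]
      refine Filter.Eventually.of_forall fun t ht => ?_
      have h0 : (0:ℝ) ≤ t ^ (a-1) := Real.rpow_nonneg ht.1.le _
      rw [Real.norm_of_nonneg (mul_nonneg h0 (Real.exp_pos _).le)]
      nlinarith [Real.exp_le_one_iff.mpr (by linarith [ht.1.le] : -t ≤ 0), (Real.exp_pos (-t)).le]
    refine setIntegral_mono_on hprod hintr measurableSet_Ioc fun t ht => ?_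
    have h0 : (0:ℝ) ≤ t ^ (a-1) := Real.rpow_nonneg ht.1.le _
    nlinarith [Real.exp_le_one_iff.mpr (by linarith [ht.1.le] : -t ≤ 0), (Real.exp_pos (-t)).le]
  have h2 : (∫ t in Set.Ioc (0:ℝ) x, t ^ (a-1)) = x ^ a / a := by
    rw [← intervalIntegral.integral_of_le hx.le,
      integral_rpow (Or.inl (by linarith : (-1:ℝ) < a - 1)),
      show a - 1 + 1 = a by ring, Real.zero_rpow ha0.ne', sub_zero]
  unfold lowerRegGamma
  rw [div_le_div_iff₀ hg (by positivity)]
  have h3 := h1.trans h2.le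
  calc (∫ t in Set.Ioc (0:ℝ) x, t ^ (a-1) * Real.exp (-t)) * (a * Real.Gamma a)
      ≤ (x ^ a / a) * (a * Real.Gamma a) := by nlinarith [mul_pos ha0 hg]
    _ = x ^ a * Real.Gamma a := by field_simp

lemma sumB (M c A : ℝ) (hM : 1 ≤ M) (hc : 0 < c) (hA : 1 ≤ A) :
    Summable (fun n : ℕ => poch M n / (n.factorial : ℝ) *
      (c ^ (A + n) / ((A + n) * Real.Gamma (A + n)))) := by
  set B : ℕ → ℝ := fun n => poch M n / (n.factorial : ℝ) *
      (c ^ (A + n) / ((A + n) * Real.Gamma (A + n))) with hB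
  have han : ∀ n : ℕ, (0:ℝ) < A + n := fun n => by
    have : (0:ℝ) ≤ n := n.cast_nonneg; linarith
  have hpos : ∀ n : ℕ, 0 < B n := by
    intro n
    have h1 : 0 < poch M n := by unfold poch; exact ascPochhammer_pos n M (by linarith)
    have h3 : 0 < Real.Gamma (A + n) := Real.Gamma_pos_of_pos (han n)
    have h4 : (0:ℝ) < n.factorial := by exact_mod_cast n.factorial_pos
    have h5 : 0 < c ^ (A + (n:ℝ)) := Real.rpow_pos_of_pos hc _
    exact mul_pos (div_pos h1 h4) (div_pos h5 (mul_pos (han n) h3))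
  apply summable_of_ratio_norm_eventually_le (r := 1/2) (by norm_num)
  filter_upwards [eventually_ge_atTop (⌈2*(M+1)*c⌉₊)] with n hn
  have hn' : 2*(M+1)*c ≤ (n:ℝ) := le_trans (Nat.le_ceil _) (by exact_mod_cast hn)
  have h2 : (0:ℝ) < A + n := han n
  have hGpos : 0 < Real.Gamma (A + n) := Real.Gamma_pos_of_pos h2
  have hfpos : (0:ℝ) < n.factorial := by exact_mod_cast n.factorial_pos
  have key : B (n+1) = B n * ((M + n) * c / ((n+1) * (A + n + 1))) := by
    have hpoch : poch M (n+1) = poch M n * (M + n) := by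
      unfold poch; rw [ascPochhammer_succ_eval]
    have hne1 : (A + (n:ℝ)) ≠ 0 := h2.ne'
    have hne2 : Real.Gamma (A + n) ≠ 0 := hGpos.ne'
    have hne3 : ((n.factorial : ℝ)) ≠ 0 := hfpos.ne'
    have hne4 : ((n:ℝ) + 1) ≠ 0 := by positivity
    have hne5 : (A + (n:ℝ) + 1) ≠ 0 := by positivity
    simp only [hB]
    rw [hpoch, Nat.factorial_succ]
    push_cast
    rw [show A + ((n:ℝ)+1) = (A + (n:ℝ)) + 1 by ring, Real.rpow_add hc, Real.rpow_one,
      Real.Gamma_add_one hne1]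
    field_simp
  have hfr : (M + n) * c / ((n+1) * (A + n + 1)) ≤ 1/2 := by
    rw [div_le_iff₀ (by positivity)]
    have hnn : (0:ℝ) ≤ n := n.cast_nonneg
    have h1 : M + n ≤ (M+1) * ((n:ℝ)+1) := by nlinarith
    calc (M + n) * c ≤ ((M+1) * ((n:ℝ)+1)) * c :=
          mul_le_mul_of_nonneg_right h1 hc.le
      _ = ((n:ℝ)+1) * ((M+1)*c) := by ring
      _ ≤ ((n:ℝ)+1) * ((n:ℝ)/2) := by
          apply mul_le_mul_of_nonneg_left _ (by linarith)
          linarith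
      _ ≤ 1/2 * (((n:ℝ)+1) * (A + n + 1)) := by nlinarith
  calc ‖B (n+1)‖ = B (n+1) := Real.norm_of_nonneg (hpos _).le
    _ = B n * ((M + n) * c / ((n+1) * (A + n + 1))) := key
    _ ≤ B n * (1/2) := mul_le_mul_of_nonneg_left hfr (hpos n).le
    _ = 1/2 * ‖B n‖ := by rw [Real.norm_of_nonneg (hpos n).le]; ring

theorem stmt_4 (ωe ρ σ0sq γe : ℝ) (hω : 0 < ωe) (hρ : 0 < ρ) (hσ : 0 < σ0sq)
    (hγ : 0 < γe) (k L q : ℕ) (hk : 0 < k) (hL : 0 < L) (hq : 0 < q) (hkq : k ≤ q) :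
    ∫ g in Set.Ioi (0:ℝ),
        (1 / ωe) * Real.exp (-g / ωe) *
          ((σ0sq / (ρ * g + σ0sq)) ^ ((k : ℝ) * L) *
            ∑' n : ℕ, poch ((k : ℝ) * L) n / (n.factorial : ℝ) *
              (ρ * g / (ρ * g + σ0sq)) ^ n *
                lowerRegGamma ((q : ℝ) * L + n) (γe / σ0sq)) =
      σ0sq / (ρ * ωe) *
        ∑' n : ℕ, poch ((k : ℝ) * L) n *
          tricomiU ((n : ℝ) + 1) (2 - (k : ℝ) * L) (σ0sq / (ρ * ωe)) *
            lowerRegGamma ((q : ℝ) * L + n) (γe / σ0sq) := by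
  set M : ℝ := (k : ℝ) * L with hM
  set A : ℝ := (q : ℝ) * L with hA
  set c : ℝ := γe / σ0sq with hc
  set z : ℝ := σ0sq / (ρ * ωe) with hz
  have hk1 : (1:ℝ) ≤ k := by exact_mod_cast hk
  have hL1 : (1:ℝ) ≤ L := by exact_mod_cast hL
  have hq1 : (1:ℝ) ≤ q := by exact_mod_cast hq
  have hM1 : 1 ≤ M := by rw [hM]; nlinarith
  have hA1 : 1 ≤ A := by rw [hA]; nlinarith
  have hc0 : 0 < c := div_pos hγ hσ
  have hAn1 : ∀ n : ℕ, 1 ≤ A + n := fun n => by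
    have : (0:ℝ) ≤ n := n.cast_nonneg; linarith
  have hAn0 : ∀ n : ℕ, 0 < A + n := fun n => lt_of_lt_of_le one_pos (hAn1 n)
  have hPnn : ∀ n : ℕ, 0 ≤ lowerRegGamma (A + n) c := fun n => lrg_nonneg _ _ (hAn0 n)
  have hpoch : ∀ n : ℕ, 0 < poch M n := fun n => by
    unfold poch; exact ascPochhammer_pos n M (by linarith)
  have hfac : ∀ n : ℕ, (0:ℝ) < n.factorial := fun n => by exact_mod_cast n.factorial_pos
  -- summability of the coefficient sequence
  have hbnn : ∀ n : ℕ, 0 ≤ poch M n / (n.factorial:ℝ) * lowerRegGamma (A + n) c :=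
    fun n => mul_nonneg (div_nonneg (hpoch n).le (hfac n).le) (hPnn n)
  have hbsum : Summable (fun n : ℕ => poch M n / (n.factorial:ℝ) * lowerRegGamma (A + n) c) := by
    refine Summable.of_nonneg_of_le hbnn (fun n => ?_) (sumB M c A hM1 hc0 hA1)
    exact mul_le_mul_of_nonneg_left (lrg_le _ _ (hAn1 n) hc0)
      (div_nonneg (hpoch n).le (hfac n).le)
  -- split the integrand into a series
  have hsplit : ∀ g ∈ Set.Ioi (0:ℝ),
      (1 / ωe) * Real.exp (-g / ωe) *
        ((σ0sq / (ρ * g + σ0sq)) ^ M *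
          ∑' n : ℕ, poch M n / (n.factorial : ℝ) * (ρ * g / (ρ * g + σ0sq)) ^ n *
            lowerRegGamma (A + n) c) =
      ∑' n : ℕ, (1 / ωe) * Real.exp (-g / ωe) *
        ((σ0sq / (ρ * g + σ0sq)) ^ M *
          (poch M n / (n.factorial : ℝ) * (ρ * g / (ρ * g + σ0sq)) ^ n *
            lowerRegGamma (A + n) c)) := by
    intro g _
    rw [tsum_mul_left, tsum_mul_left]
  rw [setIntegral_congr_fun measurableSet_Ioi hsplit]
  -- measurability of each term
  have hden : ∀ g ∈ Set.Ioi (0:ℝ), ρ * g + σ0sq ≠ 0 := fun g hg => by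
    have hg0 : (0:ℝ) < g := hg
    positivity
  have hmeas : ∀ n : ℕ, AEStronglyMeasurable
      (fun g : ℝ => (1 / ωe) * Real.exp (-g / ωe) *
        ((σ0sq / (ρ * g + σ0sq)) ^ M *
          (poch M n / (n.factorial : ℝ) * (ρ * g / (ρ * g + σ0sq)) ^ n *
            lowerRegGamma (A + n) c))) (volume.restrict (Set.Ioi 0)) := by
    intro n
    refine ContinuousOn.aestronglyMeasurable ?_ measurableSet_Ioi
    have hcd : ContinuousOn (fun g : ℝ => ρ * g + σ0sq) (Set.Ioi 0) :=
      ((continuous_const.mul continuous_id).add continuous_const).continuousOn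
    apply ContinuousOn.mul
    · exact (continuous_const.mul
        (Real.continuous_exp.comp (continuous_id.neg.div_const ωe))).continuousOn
    · apply ContinuousOn.mul
      · exact (continuousOn_const.div hcd hden).rpow_const
          (fun g hg => Or.inr (by linarith))
      · have h1 : ContinuousOn (fun g : ℝ => (ρ * g / (ρ * g + σ0sq)) ^ n) (Set.Ioi 0) :=
          (((continuous_const.mul continuous_id).continuousOn).div hcd hden).pow n
        exact (continuousOn_const.mul h1).mul continuousOn_const
  -- finiteness of the sum of lintegrals
  have hdens_int : IntegrableOn (fun g : ℝ => 1 / ωe * Real.exp (-g / ωe)) (Set.Ioi 0) := by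
    have h0 : (0:ℝ) < ωe⁻¹ := by positivity
    have h1 := (exp_neg_integrableOn_Ioi 0 h0).const_mul (1 / ωe)
    have heq : ∀ g : ℝ, -ωe⁻¹ * g = -g / ωe := fun g => by ring
    simpa only [heq, IntegrableOn] using h1
  have hJ : (∫⁻ g in Set.Ioi (0:ℝ), ENNReal.ofReal (1 / ωe * Real.exp (-g / ωe))) ≠ ⊤ := by
    rw [← ofReal_integral_eq_lintegral_ofReal hdens_int
      (Filter.Eventually.of_forall fun g => by positivity)]
    exact ENNReal.ofReal_ne_top
  have hfin : (∑' n : ℕ, ∫⁻ g in Set.Ioi (0:ℝ),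
      ‖(1 / ωe) * Real.exp (-g / ωe) *
        ((σ0sq / (ρ * g + σ0sq)) ^ M *
          (poch M n / (n.factorial : ℝ) * (ρ * g / (ρ * g + σ0sq)) ^ n *
            lowerRegGamma (A + n) c))‖₊) ≠ ⊤ := by
    have hbound : ∀ n : ℕ, (∫⁻ g in Set.Ioi (0:ℝ),
        ‖(1 / ωe) * Real.exp (-g / ωe) *
          ((σ0sq / (ρ * g + σ0sq)) ^ M *
            (poch M n / (n.factorial : ℝ) * (ρ * g / (ρ * g + σ0sq)) ^ n *
              lowerRegGamma (A + n) c))‖₊) ≤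
        ENNReal.ofReal (poch M n / (n.factorial:ℝ) * lowerRegGamma (A + n) c) *
          ∫⁻ g in Set.Ioi (0:ℝ), ENNReal.ofReal (1 / ωe * Real.exp (-g / ωe)) := by
      intro n
      rw [← lintegral_const_mul' _ _ ENNReal.ofReal_ne_top]
      apply lintegral_mono_ae
      rw [ae_restrict_iff' measurableSet_Ioi]
      refine Filter.Eventually.of_forall fun g hg => ?_
      have hg0 : (0:ℝ) < g := hg
      have hdg : (0:ℝ) < ρ * g + σ0sq := by positivity
      have hs0 : (0:ℝ) ≤ (σ0sq / (ρ * g + σ0sq)) ^ M :=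
        Real.rpow_nonneg (div_nonneg hσ.le hdg.le) M
      have hs1 : (σ0sq / (ρ * g + σ0sq)) ^ M ≤ 1 :=
        Real.rpow_le_one (div_nonneg hσ.le hdg.le)
          ((div_le_one hdg).mpr (by nlinarith)) (by linarith)
      have hx0 : (0:ℝ) ≤ (ρ * g / (ρ * g + σ0sq)) ^ n :=
        pow_nonneg (div_nonneg (by positivity) hdg.le) n
      have hx1 : (ρ * g / (ρ * g + σ0sq)) ^ n ≤ 1 :=
        pow_le_one₀ (div_nonneg (by positivity) hdg.le) ((div_le_one hdg).mpr (by linarith))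
      have hpf : (0:ℝ) ≤ poch M n / (n.factorial:ℝ) :=
        div_nonneg (hpoch n).le (hfac n).le
      have hd0 : (0:ℝ) ≤ 1 / ωe * Real.exp (-g / ωe) := by positivity
      have hbody_nn : (0:ℝ) ≤ (1 / ωe) * Real.exp (-g / ωe) *
          ((σ0sq / (ρ * g + σ0sq)) ^ M *
            (poch M n / (n.factorial : ℝ) * (ρ * g / (ρ * g + σ0sq)) ^ n *
              lowerRegGamma (A + n) c)) := by
        apply mul_nonneg hd0
        exact mul_nonneg hs0 (mul_nonneg (mul_nonneg hpf hx0) (hPnn n))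
      rw [← enorm_eq_nnnorm, Real.enorm_eq_ofReal hbody_nn, ← ENNReal.ofReal_mul (hbnn n)]
      apply ENNReal.ofReal_le_ofReal
      have step1 : poch M n / (n.factorial:ℝ) * (ρ * g / (ρ * g + σ0sq)) ^ n *
          lowerRegGamma (A + n) c ≤ poch M n / (n.factorial:ℝ) * lowerRegGamma (A + n) c := by
        have := mul_le_mul_of_nonneg_left hx1 hpf
        exact mul_le_mul_of_nonneg_right (by simpa using this) (hPnn n)
      have step2 : (σ0sq / (ρ * g + σ0sq)) ^ M *
          (poch M n / (n.factorial:ℝ) * (ρ * g / (ρ * g + σ0sq)) ^ n *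
            lowerRegGamma (A + n) c) ≤
          poch M n / (n.factorial:ℝ) * lowerRegGamma (A + n) c := by
        calc (σ0sq / (ρ * g + σ0sq)) ^ M *
            (poch M n / (n.factorial:ℝ) * (ρ * g / (ρ * g + σ0sq)) ^ n *
              lowerRegGamma (A + n) c) ≤
            1 * (poch M n / (n.factorial:ℝ) * lowerRegGamma (A + n) c) :=
              mul_le_mul hs1 step1
                (mul_nonneg (mul_nonneg hpf hx0) (hPnn n)) one_pos.le
          _ = poch M n / (n.factorial:ℝ) * lowerRegGamma (A + n) c := one_mul _
      calc (1 / ωe) * Real.exp (-g / ωe) *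
          ((σ0sq / (ρ * g + σ0sq)) ^ M *
            (poch M n / (n.factorial : ℝ) * (ρ * g / (ρ * g + σ0sq)) ^ n *
              lowerRegGamma (A + n) c)) ≤
          (1 / ωe) * Real.exp (-g / ωe) *
            (poch M n / (n.factorial:ℝ) * lowerRegGamma (A + n) c) :=
            mul_le_mul_of_nonneg_left step2 hd0
        _ = poch M n / (n.factorial:ℝ) * lowerRegGamma (A + n) c *
            (1 / ωe * Real.exp (-g / ωe)) := by ring
    refine ne_top_of_le_ne_top ?_ (ENNReal.tsum_le_tsum hbound)
    rw [ENNReal.tsum_mul_right, ← ENNReal.ofReal_tsum_of_nonneg hbnn hbsum]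
    exact ENNReal.mul_ne_top ENNReal.ofReal_ne_top hJ
  rw [integral_tsum hmeas hfin]
  -- identify each term
  have hterm : ∀ n : ℕ, (∫ g in Set.Ioi (0:ℝ), (1 / ωe) * Real.exp (-g / ωe) *
      ((σ0sq / (ρ * g + σ0sq)) ^ M *
        (poch M n / (n.factorial : ℝ) * (ρ * g / (ρ * g + σ0sq)) ^ n *
          lowerRegGamma (A + n) c))) =
      z * (poch M n * tricomiU ((n:ℝ) + 1) (2 - M) z * lowerRegGamma (A + n) c) := by
    intro n
    have hfun : ∀ g : ℝ, (1 / ωe) * Real.exp (-g / ωe) *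
        ((σ0sq / (ρ * g + σ0sq)) ^ M *
          (poch M n / (n.factorial : ℝ) * (ρ * g / (ρ * g + σ0sq)) ^ n *
            lowerRegGamma (A + n) c)) =
        (poch M n / (n.factorial : ℝ) * lowerRegGamma (A + n) c) *
          ((1 / ωe) * Real.exp (-g / ωe) *
            ((σ0sq / (ρ * g + σ0sq)) ^ M * (ρ * g / (ρ * g + σ0sq)) ^ n)) := fun g => by
      ring
    simp only [hfun]
    rw [integral_const_mul, intA ωe ρ σ0sq hω hρ hσ M n]
    rw [← hz]
    have := (hfac n).ne'
    field_simp
  rw [tsum_congr hterm, tsum_mul_left]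
end
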